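/- Let m, d, τ, r^{-1} > 0. Then the cubic polynomial mτ s^3 + (m + dτ)s^2 + (d + r^{-1} + λτ)s + λ has all roots with strictly negative real part for every λ > 0. -/
import Mathlib


/-- Hurwitz stability of the closed-loop cubic of the turbine-generator model:
all roots of `mτ s³ + (m + dτ)s² + (d + r⁻¹ + λτ)s + λ` have negative real part
for every `λ > 0`. -/
theorem stmt6 (m d τ rinv : ℝ) (hm : 0 < m) (hd : 0 < d) (hτ : 0 < τ) (hr : 0 < rinv) :
    ∀ lam : ℝ, 0 < lam → ∀ s : ℂ,
      (↑(m * τ) : ℂ) * s ^ 3 + (↑(m + d * τ) : ℂ) * s ^ 2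
          + (↑(d + rinv + lam * τ) : ℂ) * s + (↑lam : ℂ) = 0 → s.re < 0 := by
  intro lam hlam s hs
  by_contra hx
  push_neg at hx
  have h1 := congrArg Complex.re hs
  have h2 := congrArg Complex.im hs
  simp only [Complex.add_re, Complex.add_im, Complex.mul_re, Complex.mul_im,
    pow_succ, pow_zero, one_mul, Complex.ofReal_re, Complex.ofReal_im,
    Complex.zero_re, Complex.zero_im, zero_mul, mul_zero, zero_sub, sub_zero, zero_add] at h1 h2
  set x := s.re
  set y := s.im
  rcases eq_or_ne y 0 with hy | hy
  · rw [hy] at h1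
    nlinarith [mul_pos hm hτ, mul_pos hd hτ, mul_pos hlam hτ,
      mul_nonneg hx hx, mul_nonneg (mul_nonneg hx hx) hx]
  · have hfac : y * ((m*τ)*y^2 - (3*(m*τ)*x^2 + 2*(m+d*τ)*x + (d+rinv+lam*τ))) = 0 := by
      linear_combination (-1 : ℝ) * h2
    have key : (m*τ)*y^2 = 3*(m*τ)*x^2 + 2*(m+d*τ)*x + (d+rinv+lam*τ) := by
      rcases mul_eq_zero.mp hfac with h | h
      · exact absurd h hy
      · linarith
    have main : (m*τ)*lam - (m+d*τ)*(d+rinv+lam*τ) =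
        8*(m*τ)^2*x^3 + 8*(m*τ)*(m+d*τ)*x^2
          + 2*((m*τ)*(d+rinv+lam*τ)+(m+d*τ)^2)*x := by
      linear_combination (m*τ)*h1 + (3*(m*τ)*x + (m+d*τ))*key
    nlinarith [mul_pos hm hd, mul_pos hm hr, mul_pos (mul_pos hd hd) hτ,
      mul_pos (mul_pos hd hr) hτ, mul_pos (mul_pos hd (mul_pos hlam hτ)) hτ,
      mul_nonneg (mul_nonneg (mul_nonneg hx hx) hx) (sq_nonneg (m*τ)),
      mul_nonneg (mul_nonneg hx hx) (le_of_lt (mul_pos (mul_pos hm hτ) (by positivity : (0:ℝ) < m + d*τ))),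
      mul_nonneg hx (le_of_lt (mul_pos (mul_pos hm hτ) (by positivity : (0:ℝ) < d+rinv+lam*τ))),
      mul_nonneg hx (sq_nonneg (m+d*τ))]
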